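/- Consider the stabilized first-order update on the left neighbor cell: u_{k−1}^{n+1} = u_{k−1}^n − (Δt/h)·((1−η)H(u_{k−1}^n, u_{k₁}^n) + η H(u_{k−1}^n, u_{k₂}^n) − H(u_{k−2}^n, u_{k−1}^n)), where η ∈ (0,1), Δt, h > 0, H is differentiable, non-decreasing in the first argument, non-increasing in the second argument, and satisfies |∂₁H(u,v)| + |∂₂H(w,u)| ≤ h/Δt for all u,v,w (taking ν ≤ 1). Then all partial derivatives of u_{k−1}^{n+1} with respect to u_{k−2}^n, u_{k−1}^n, u_{k₁}^n, u_{k₂}^n are nonnegative. -/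

import Mathlib

open Topology Filter in
lemma mono_hasDerivAt_nonneg {f : ℝ → ℝ} {f' a : ℝ} (hm : Monotone f)
    (hd : HasDerivAt f f' a) : 0 ≤ f' := by
  have ht : Filter.Tendsto (slope f a) (𝓝[>] a) (𝓝 f') :=
    (hasDerivAt_iff_tendsto_slope.mp hd).mono_left
      (nhdsWithin_mono a fun x hx => ne_of_gt hx)
  refine ge_of_tendsto ht ?_
  filter_upwards [self_mem_nhdsWithin] with x hx
  have hx' : a < x := hx
  rw [slope_def_field]
  exact div_nonneg (sub_nonneg.2 (hm hx'.le)) (sub_nonneg.2 hx'.le)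

lemma anti_hasDerivAt_nonpos {f : ℝ → ℝ} {f' a : ℝ} (hm : Antitone f)
    (hd : HasDerivAt f f' a) : f' ≤ 0 := by
  have := mono_hasDerivAt_nonneg (f := fun x => -f x) (fun x y hxy => neg_le_neg (hm hxy)) hd.neg
  linarith

/-- Monotonicity of the stabilized first-order update on the left neighbor `I_{k−1}`. -/
theorem left_neighbor_update_monotone
    (h Δt η : ℝ) (hh : 0 < h) (hΔt : 0 < Δt) (hη0 : 0 < η) (hη1 : η < 1)
    (H H1 H2 : ℝ → ℝ → ℝ)
    (hH1 : ∀ a b : ℝ, HasDerivAt (fun x => H x b) (H1 a b) a)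
    (hH2 : ∀ a b : ℝ, HasDerivAt (fun y => H a y) (H2 a b) b)
    (hmono1 : ∀ b, Monotone (fun a => H a b))
    (hmono2 : ∀ a, Antitone (fun b => H a b))
    (hbound : ∀ u v w : ℝ, |H1 u v| + |H2 w u| ≤ h / Δt) :
    ∀ a b c d : ℝ,
      0 ≤ deriv (fun x => b - Δt / h * ((1 - η) * H b c + η * H b d - H x b)) a ∧
      0 ≤ deriv (fun x => x - Δt / h * ((1 - η) * H x c + η * H x d - H a x)) b ∧
      0 ≤ deriv (fun x => b - Δt / h * ((1 - η) * H b x + η * H b d - H a b)) c ∧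
      0 ≤ deriv (fun x => b - Δt / h * ((1 - η) * H b c + η * H b x - H a b)) d := by
  intro a b c d
  have hH1nn : ∀ a b : ℝ, 0 ≤ H1 a b := fun a b =>
    mono_hasDerivAt_nonneg (hmono1 b) (hH1 a b)
  have hH2np : ∀ a b : ℝ, H2 a b ≤ 0 := fun a b =>
    anti_hasDerivAt_nonpos (hmono2 a) (hH2 a b)
  have hhΔt : 0 ≤ Δt / h := le_of_lt (div_pos hΔt hh)
  refine ⟨?_, ?_, ?_, ?_⟩
  · -- derivative w.r.t. a
    have hd : HasDerivAt (fun x => b - Δt / h * ((1 - η) * H b c + η * H b d - H x b))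
        (Δt / h * H1 a b) a := by
      have := (((hH1 a b).const_sub ((1 - η) * H b c + η * H b d)).const_mul
        (Δt / h)).const_sub b
      exact this.congr_deriv (by ring)
    rw [hd.deriv]
    exact mul_nonneg hhΔt (hH1nn a b)
  · -- derivative w.r.t. b
    have hd : HasDerivAt (fun x => x - Δt / h * ((1 - η) * H x c + η * H x d - H a x))
        (1 - Δt / h * ((1 - η) * H1 b c + η * H1 b d - H2 a b)) b := by
      have h1 := ((hH1 b c).const_mul (1 - η)).add ((hH1 b d).const_mul η)
      have h2 := (h1.sub (hH2 a b)).const_mul (Δt / h)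
      have := (hasDerivAt_id b).sub h2
      exact this
    rw [hd.deriv]
    have key : (1 - η) * H1 b c + η * H1 b d - H2 a b ≤ h / Δt := by
      have hb1 := hbound b c a
      have hb2 := hbound b d a
      have e1 : |H1 b c| = H1 b c := abs_of_nonneg (hH1nn b c)
      have e2 : |H1 b d| = H1 b d := abs_of_nonneg (hH1nn b d)
      have e3 : |H2 a b| = -H2 a b := abs_of_nonpos (hH2np a b)
      rw [e1, e3] at hb1
      rw [e2, e3] at hb2
      nlinarith
    have : Δt / h * ((1 - η) * H1 b c + η * H1 b d - H2 a b) ≤ 1 := by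
      have := mul_le_mul_of_nonneg_left key hhΔt
      calc Δt / h * ((1 - η) * H1 b c + η * H1 b d - H2 a b)
          ≤ Δt / h * (h / Δt) := this
        _ = 1 := by field_simp
    linarith
  · -- derivative w.r.t. c
    have hd : HasDerivAt (fun x => b - Δt / h * ((1 - η) * H b x + η * H b d - H a b))
        (-(Δt / h * ((1 - η) * H2 b c))) c := by
      have := ((((hH2 b c).const_mul (1 - η)).add_const (η * H b d)).sub_const
        (H a b)).const_mul (Δt / h) |>.const_sub b
      convert this using 1
    rw [hd.deriv]
    have : (1 - η) * H2 b c ≤ 0 :=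
      mul_nonpos_of_nonneg_of_nonpos (by linarith) (hH2np b c)
    nlinarith
  · -- derivative w.r.t. d
    have hd : HasDerivAt (fun x => b - Δt / h * ((1 - η) * H b c + η * H b x - H a b))
        (-(Δt / h * (η * H2 b d))) d := by
      have := ((((hH2 b d).const_mul η).const_add ((1 - η) * H b c)).sub_const
        (H a b)).const_mul (Δt / h) |>.const_sub b
      convert this using 1
    rw [hd.deriv]
    have : η * H2 b d ≤ 0 := mul_nonpos_of_nonneg_of_nonpos hη0.le (hH2np b d)
    nlinarith
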